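/- Forcing with a semi-Cohen Boolean algebra does not add new cofinal branches to trees of height ω₁: if B is semi-Cohen, T is a tree of height ω₁, and b is a B-name for a branch of T, then it is forced that b is equal to some branch of T in the ground model. -/

import Mathlib

def Subalg {B : Type*} [BooleanAlgebra B] (A : Set B) : Prop :=
  ⊥ ∈ A ∧ ⊤ ∈ A ∧ (∀ x ∈ A, ∀ y ∈ A, x ⊔ y ∈ A) ∧ (∀ x ∈ A, xᶜ ∈ A)

def MaxACIn {B : Type*} [BooleanAlgebra B] (W A : Set B) : Prop :=
  W ⊆ A ∧ ⊥ ∉ W ∧ W.Pairwise (fun x y => x ⊓ y = ⊥) ∧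
    ∀ a ∈ A, a ≠ ⊥ → ∃ w ∈ W, a ⊓ w ≠ ⊥

/-- `X` is a regular subalgebra of `A`: every maximal antichain of `X` is maximal in `A`. -/
def RegIn {B : Type*} [BooleanAlgebra B] (X A : Set B) : Prop :=
  ∀ W : Set B, MaxACIn W X → MaxACIn W A

/-- `C` is a closed unbounded family of countable subsets of `A`. -/
def ClubIn {B : Type*} (A : Set B) (C : Set (Set B)) : Prop :=
  (∀ x ∈ C, x ⊆ A ∧ x.Countable) ∧
  (∀ f : ℕ → Set B, (∀ n, f n ∈ C) → Monotone f → (⋃ n, f n) ∈ C) ∧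
  (∀ x : Set B, x ⊆ A → x.Countable → ∃ y ∈ C, x ⊆ y)

/-- Density below `a` of the subalgebra carried by `A`. -/
noncomputable def densIn {B : Type*} [BooleanAlgebra B] (A : Set B) (a : B) : Cardinal :=
  sInf {c : Cardinal | ∃ D : Set B, D ⊆ A ∧ (∀ d ∈ D, d ≤ a ∧ d ≠ ⊥) ∧
    (∀ b ∈ A, b ≤ a → b ≠ ⊥ → ∃ d ∈ D, d ≤ b) ∧ c = Cardinal.mk ↥D}

/-- The subalgebra carried by `A` has uniform density. -/
def UnifDensIn {B : Type*} [BooleanAlgebra B] (A : Set B) : Prop :=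
  ∀ a ∈ A, a ≠ ⊥ → densIn A a = densIn A ⊤

/-- The subalgebra carried by `A` is semi-Cohen: it has uniform density and a closed
unbounded family of countable regular subalgebras. -/
def SemiCohen {B : Type*} [BooleanAlgebra B] (A : Set B) : Prop :=
  UnifDensIn A ∧ ∃ C : Set (Set B), ClubIn A C ∧ ∀ X ∈ C, Subalg X ∧ RegIn X A

open Ordinal in
/-- Lemma 4.7: forcing with a (complete) semi-Cohen algebra adds no new cofinal
branches to trees of height `ω₁`. The tree `T` is presented with a level function
`lvl : T → Ordinal` with countable levels indices, and a name for a branch of `T`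
is presented Boolean-valuedly as `f : T → B`, where `f t` is the truth value of
`t ∈ ḃ`: the values along each level sum to `1` (the branch is cofinal), `f` is
monotone decreasing, and incomparable nodes get disjoint values. The conclusion says
that it is forced that `ḃ` equals some cofinal branch of `T` from the ground model:
the values deciding `ḃ` to be a ground-model branch sum to `1`. -/
theorem semiCohen_no_new_branches {B : Type*} [CompleteBooleanAlgebra B]
    (hB : SemiCohen (Set.univ : Set B))
    {T : Type*} [PartialOrder T] (lvl : T → Ordinal)
    (hlvl : ∀ t : T, lvl t < ω_ 1)
    (hmono : ∀ s t : T, s < t → lvl s < lvl t)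
    (hpred : ∀ s s' t : T, s < t → s' < t → s ≤ s' ∨ s' ≤ s)
    (hheight : ∀ α < ω_ 1, ∃ t : T, lvl t = α)
    (f : T → B)
    (hcofinal : ∀ α < ω_ 1, sSup {b : B | ∃ t : T, lvl t = α ∧ b = f t} = ⊤)
    (hchain : ∀ s t : T, s ≤ t → f t ≤ f s)
    (hincomp : ∀ s t : T, ¬s ≤ t → ¬t ≤ s → f s ⊓ f t = ⊥) :
    sSup {u : B | ∃ c : Set T, IsChain (· ≤ ·) c ∧
        (∀ α < ω_ 1, ∃ t ∈ c, lvl t = α) ∧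
        ∀ t : T, (t ∈ c → u ≤ f t) ∧ (t ∉ c → u ≤ (f t)ᶜ)} = ⊤ := by
  classical
  by_contra hS
  obtain ⟨-, C, ⟨hC1, hC2, hC3⟩, hC4⟩ := hB
  set S := sSup {u : B | ∃ c : Set T, IsChain (· ≤ ·) c ∧
      (∀ α < ω_ 1, ∃ t ∈ c, lvl t = α) ∧
      ∀ t : T, (t ∈ c → u ≤ f t) ∧ (t ∉ c → u ≤ (f t)ᶜ)} with hSdef
  set a := Sᶜ with hadef
  have ha0 : a ≠ ⊥ := fun h => hS (compl_eq_bot.mp h)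
  -- basic Boolean lemmas
  have hinf_bot : ∀ x y : B, x ⊓ yᶜ = ⊥ → x ≤ y := fun x y h => by
    rwa [← sdiff_eq, sdiff_eq_bot_iff] at h
  have hle_compl : ∀ x y : B, x ⊓ y = ⊥ → x ≤ yᶜ := fun x y h =>
    hinf_bot x yᶜ (by rwa [compl_compl])
  have hinf_ne : ∀ x y : B, ¬x ≤ y → x ⊓ yᶜ ≠ ⊥ := fun x y h hc => h (hinf_bot _ _ hc)
  -- distinct nodes on a common level have disjoint values
  have hsame : ∀ s t : T, lvl s = lvl t → s ≠ t → f s ⊓ f t = ⊥ := by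
    intro s t hl hne
    refine hincomp s t (fun h => ?_) (fun h => ?_)
    · exact absurd (hmono s t (lt_of_le_of_ne h hne)) (by rw [hl]; exact lt_irrefl _)
    · exact absurd (hmono t s (lt_of_le_of_ne h (Ne.symm hne))) (by rw [hl]; exact lt_irrefl _)
  -- every nonzero element is compatible with some node value on each level
  have key1 : ∀ (α : Ordinal) (x : B), α < ω_ 1 → x ≠ ⊥ →
      ∃ t : T, lvl t = α ∧ x ⊓ f t ≠ ⊥ := by
    intro α x hα hx
    by_contra hcon
    push_neg at hcon
    apply hx
    have h1 : x = x ⊓ sSup {b : B | ∃ t : T, lvl t = α ∧ b = f t} := by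
      rw [hcofinal α hα, inf_top_eq]
    rw [h1, inf_sSup_eq]
    refine le_bot_iff.mp (iSup₂_le ?_)
    rintro w ⟨t, ht, rfl⟩
    exact (hcon t ht).le
  obtain ⟨t0, -⟩ := hheight 0 (omega_pos 1)
  haveI : Nonempty T := ⟨t0⟩
  have key1' : ∀ (α : Ordinal) (x : B), ∃ t : T, α < ω_ 1 → x ≠ ⊥ →
      lvl t = α ∧ x ⊓ f t ≠ ⊥ := by
    intro α x
    by_cases hα : α < ω_ 1
    · by_cases hx : x = ⊥
      · exact ⟨t0, fun _ h => absurd hx h⟩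
      · obtain ⟨t, h⟩ := key1 α x hα hx; exact ⟨t, fun _ _ => h⟩
    · exact ⟨t0, fun h => absurd h hα⟩
  choose g1 hg1 using key1'
  -- splitting: every nonzero x ≤ a is compatible with two distinct nodes on a common level
  have keyA : ∀ x : B, x ≠ ⊥ → x ≤ a →
      ∃ p : T × T, lvl p.1 = lvl p.2 ∧ p.1 ≠ p.2 ∧ x ⊓ f p.1 ≠ ⊥ ∧ x ⊓ f p.2 ≠ ⊥ := by
    intro x hx hxa
    by_contra hcon
    push_neg at hcon
    have hxle : ∀ t : T, x ⊓ f t ≠ ⊥ → x ≤ f t := by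
      intro t ht
      have h1 : x = x ⊓ sSup {w : B | ∃ t' : T, lvl t' = lvl t ∧ w = f t'} := by
        rw [hcofinal _ (hlvl t), inf_top_eq]
      have h2 : x ⊓ sSup {w : B | ∃ t' : T, lvl t' = lvl t ∧ w = f t'} ≤ f t := by
        rw [inf_sSup_eq]
        refine iSup₂_le ?_
        rintro w ⟨t', hlv, rfl⟩
        by_cases he : t' = t
        · subst he; exact inf_le_right
        · exact (hcon (t, t') hlv.symm (fun hh => he hh.symm) ht).le.trans bot_le
      exact (le_of_eq h1).trans h2
    set c := {t : T | x ⊓ f t ≠ ⊥} with hcd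
    have hchainc : IsChain (· ≤ ·) c := by
      intro t ht t' ht' hne
      by_contra hcomp
      push_neg at hcomp
      have : x ≤ f t ⊓ f t' := le_inf (hxle t ht) (hxle t' ht')
      rw [hincomp t t' hcomp.1 hcomp.2] at this
      exact hx (le_bot_iff.mp this)
    have hmem : x ∈ {u : B | ∃ c : Set T, IsChain (· ≤ ·) c ∧
        (∀ α < ω_ 1, ∃ t ∈ c, lvl t = α) ∧
        ∀ t : T, (t ∈ c → u ≤ f t) ∧ (t ∉ c → u ≤ (f t)ᶜ)} := by
      refine ⟨c, hchainc, fun α hα => ?_, fun t => ⟨fun ht => hxle t ht, fun ht => ?_⟩⟩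
      · obtain ⟨t, h1, h2⟩ := key1 α x hα hx
        exact ⟨t, h2, h1⟩
      · have : x ⊓ f t = ⊥ := not_not.mp ht
        exact hle_compl _ _ this
    have hxS : x ≤ S := le_sSup hmem
    have : x ≤ S ⊓ Sᶜ := le_inf hxS hxa
    rw [inf_compl_eq_bot] at this
    exact hx (le_bot_iff.mp this)
  have keyA' : ∀ x : B, ∃ p : T × T, x ≠ ⊥ → x ≤ a →
      lvl p.1 = lvl p.2 ∧ p.1 ≠ p.2 ∧ x ⊓ f p.1 ≠ ⊥ ∧ x ⊓ f p.2 ≠ ⊥ := by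
    intro x
    by_cases hx : x = ⊥
    · exact ⟨(t0, t0), fun h => absurd hx h⟩
    · by_cases hxa : x ≤ a
      · obtain ⟨p, h⟩ := keyA x hx hxa; exact ⟨p, fun _ _ => h⟩
      · exact ⟨(t0, t0), fun _ h => absurd h hxa⟩
  choose g2 hg2 using keyA'
  -- club closure
  have hclub' : ∀ s : Set B, ∃ y : Set B, s.Countable → y ∈ C ∧ s ⊆ y := by
    intro s
    by_cases h : s.Countable
    · obtain ⟨y, hy1, hy2⟩ := hC3 s (Set.subset_univ s) h
      exact ⟨y, fun _ => ⟨hy1, hy2⟩⟩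
    · exact ⟨∅, fun hc => absurd hc h⟩
  choose clubUp hclubUp using hclub'
  -- the recursive construction
  obtain ⟨XX, NN, hX0, hN0, hNs, hXs⟩ :
      ∃ (XX : ℕ → Set B) (NN : ℕ → Set T),
        XX 0 = clubUp {a} ∧ NN 0 = (∅ : Set T) ∧
        (∀ n, NN (n + 1) = NN n ∪ (⋃ t ∈ NN n, ⋃ x ∈ XX n, {g1 (lvl t) x}) ∪
            (⋃ x ∈ XX n, {(g2 x).1, (g2 x).2})) ∧
        (∀ n, XX (n + 1) = clubUp (XX n ∪ f '' NN (n + 1))) := by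
    refine ⟨fun n => (Nat.rec (motive := fun _ => Set B × Set T) (clubUp {a}, (∅ : Set T)) (fun _ p =>
        (clubUp (p.1 ∪ f '' (p.2 ∪ (⋃ t ∈ p.2, ⋃ x ∈ p.1, {g1 (lvl t) x}) ∪
            (⋃ x ∈ p.1, {(g2 x).1, (g2 x).2}))),
          p.2 ∪ (⋃ t ∈ p.2, ⋃ x ∈ p.1, {g1 (lvl t) x}) ∪
            (⋃ x ∈ p.1, {(g2 x).1, (g2 x).2}))) n).1,
      fun n => (Nat.rec (motive := fun _ => Set B × Set T) (clubUp {a}, (∅ : Set T)) (fun _ p =>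
        (clubUp (p.1 ∪ f '' (p.2 ∪ (⋃ t ∈ p.2, ⋃ x ∈ p.1, {g1 (lvl t) x}) ∪
            (⋃ x ∈ p.1, {(g2 x).1, (g2 x).2}))),
          p.2 ∪ (⋃ t ∈ p.2, ⋃ x ∈ p.1, {g1 (lvl t) x}) ∪
            (⋃ x ∈ p.1, {(g2 x).1, (g2 x).2}))) n).2,
      rfl, rfl, fun n => rfl, fun n => rfl⟩
  -- countability and club membership invariants
  have hinv : ∀ n, (NN n).Countable ∧ XX n ∈ C := by
    intro n
    induction n with
    | zero =>
      rw [hN0, hX0]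
      exact ⟨Set.countable_empty, (hclubUp {a} (Set.countable_singleton a)).1⟩
    | succ n ih =>
      obtain ⟨hN, hXC⟩ := ih
      have hXcnt : (XX n).Countable := (hC1 _ hXC).2
      have hNcnt' : (NN (n + 1)).Countable := by
        rw [hNs n]
        refine (hN.union ?_).union ?_
        · exact hN.biUnion fun t _ => hXcnt.biUnion fun x _ => Set.countable_singleton _
        · exact hXcnt.biUnion fun x _ =>
            (Set.countable_singleton _).insert _
      refine ⟨hNcnt', ?_⟩
      rw [hXs n]
      exact (hclubUp _ (hXcnt.union (hNcnt'.image f))).1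
  have hcntIn : ∀ n, (XX n ∪ f '' NN (n + 1)).Countable := fun n =>
    ((hC1 _ (hinv n).2).2).union ((hinv (n + 1)).1.image f)
  have hmonoX : ∀ n, XX n ⊆ XX (n + 1) := fun n => by
    rw [hXs n]
    exact Set.subset_union_left.trans (hclubUp _ (hcntIn n)).2
  have hmonoN : ∀ n, NN n ⊆ NN (n + 1) := fun n => by
    rw [hNs n]
    exact Set.subset_union_left.trans Set.subset_union_left
  have hXle : ∀ {m n : ℕ}, m ≤ n → XX m ⊆ XX n := fun {m n} h =>
    monotone_nat_of_le_succ hmonoX h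
  have hNle : ∀ {m n : ℕ}, m ≤ n → NN m ⊆ NN n := fun {m n} h =>
    monotone_nat_of_le_succ hmonoN h
  set X := ⋃ n, XX n with hXdef
  set N := ⋃ n, NN n with hNdef
  have hXC : X ∈ C := hC2 XX (fun n => (hinv n).2) (monotone_nat_of_le_succ hmonoX)
  obtain ⟨hXsub, hXreg⟩ := hC4 X hXC
  have hNcnt : N.Countable := Set.countable_iUnion fun n => (hinv n).1
  have hmemX : ∀ n, XX n ⊆ X := fun n => Set.subset_iUnion XX n
  have hmemN : ∀ n, NN n ⊆ N := fun n => Set.subset_iUnion NN n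
  have haX : a ∈ X := hmemX 0 (by
    rw [hX0]; exact (hclubUp {a} (Set.countable_singleton a)).2 rfl)
  have hfX : ∀ t ∈ N, f t ∈ X := by
    intro t ht
    obtain ⟨n, hn⟩ := Set.mem_iUnion.mp ht
    match n, hn with
    | 0, hn => rw [hN0] at hn; exact absurd hn (Set.notMem_empty t)
    | m + 1, hn =>
      apply hmemX (m + 1 + 1)
      rw [hXs (m + 1)]
      exact (hclubUp _ (hcntIn (m + 1))).2
        (Set.mem_union_right _ ⟨t, hmonoN (m + 1) hn, rfl⟩)
  have hg1N : ∀ t ∈ N, ∀ x ∈ X, g1 (lvl t) x ∈ N := by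
    intro t ht x hx
    obtain ⟨i, hti⟩ := Set.mem_iUnion.mp ht
    obtain ⟨j, hxj⟩ := Set.mem_iUnion.mp hx
    have h1 : t ∈ NN (max i j) := hNle (le_max_left i j) hti
    have h2 : x ∈ XX (max i j) := hXle (le_max_right i j) hxj
    apply hmemN (max i j + 1)
    rw [hNs (max i j)]
    exact Set.mem_union_left _ (Set.mem_union_right _
      (Set.mem_biUnion h1 (Set.mem_biUnion h2 rfl)))
  have hg2N : ∀ x ∈ X, (g2 x).1 ∈ N ∧ (g2 x).2 ∈ N := by
    intro x hx
    obtain ⟨j, hxj⟩ := Set.mem_iUnion.mp hx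
    constructor <;>
    · apply hmemN (j + 1)
      rw [hNs j]
      refine Set.mem_union_right _ (Set.mem_biUnion hxj ?_)
      simp
  have hcompl : ∀ x ∈ X, xᶜ ∈ X := hXsub.2.2.2
  have hXinf : ∀ x ∈ X, ∀ y ∈ X, x ⊓ y ∈ X := by
    intro x hx y hy
    have h := hcompl _ (hXsub.2.2.1 _ (hcompl x hx) _ (hcompl y hy))
    rwa [compl_sup, compl_compl, compl_compl] at h
  -- the level δ above all levels in N
  haveI : Countable ↥N := hNcnt.to_subtype
  haveI : Small.{0} ↥N := Countable.toSmall _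
  have eN : ↥N ≃ Shrink.{0} ↥N := equivShrink ↥N
  haveI : Countable (Shrink.{0} ↥N) := Countable.of_equiv ↥N eN
  set δ0 := ⨆ i : Shrink.{0} ↥N, lvl ↑(eN.symm i) with hδ0def
  have hδ0lt : δ0 < ω_ 1 := by
    rw [← Cardinal.ord_aleph 1]
    refine Cardinal.iSup_lt_ord_lift_of_isRegular Cardinal.isRegular_aleph_one ?_ ?_
    · exact lt_of_le_of_lt
        ((Cardinal.lift_le.mpr Cardinal.mk_le_aleph0).trans Cardinal.lift_aleph0.le)
        Cardinal.aleph0_lt_aleph_one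
    · intro i; rw [Cardinal.ord_aleph]; exact hlvl _
  set δ := δ0 + 1 with hδdef
  have hδlt : δ < ω_ 1 := by
    rw [hδdef, Ordinal.add_one_eq_succ]
    exact (Cardinal.isSuccLimit_omega 1).succ_lt hδ0lt
  have hlvlN : ∀ t ∈ N, lvl t < δ := by
    intro t ht
    have h1 : lvl t ≤ δ0 := by
      have h0 := Ordinal.le_iSup (fun i : Shrink.{0} ↥N => lvl ↑(eN.symm i)) (eN ⟨t, ht⟩)
      simpa using h0
    have h2 : δ0 < δ := by
      rw [hδdef, Ordinal.add_one_eq_succ]; exact Order.lt_succ δ0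
    exact h1.trans_lt h2
  -- the node t* at level δ compatible with a
  obtain ⟨ts, hts_lvl, hts⟩ := key1 δ a hδlt ha0
  set b := a ⊓ f ts with hbdef
  have hb0 : b ≠ ⊥ := hts
  have hba : b ≤ a := inf_le_left
  have hbt : b ≤ f ts := inf_le_right
  -- maximal antichains from levels of N are maximal in B (by regularity)
  have hWmax : ∀ t ∈ N, ∀ y : B, y ≠ ⊥ → ∃ s ∈ N, lvl s = lvl t ∧ y ⊓ f s ≠ ⊥ := by
    intro t ht y hy
    have hmaxX : MaxACIn {w : B | ∃ s ∈ N, lvl s = lvl t ∧ w = f s ∧ w ≠ ⊥} X := by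
      refine ⟨?_, ?_, ?_, ?_⟩
      · rintro w ⟨s, hsN, -, rfl, -⟩; exact hfX s hsN
      · rintro ⟨s, -, -, -, hne⟩; exact hne rfl
      · rintro w ⟨s, hsN, hslvl, rfl, -⟩ w' ⟨s', hs'N, hs'lvl, rfl, -⟩ hne
        exact hsame s s' (hslvl.trans hs'lvl.symm) fun h => hne (by rw [h])
      · intro x hxX hx
        obtain ⟨hlv, hne⟩ := hg1 (lvl t) x (hlvl t) hx
        refine ⟨f (g1 (lvl t) x), ⟨_, hg1N t ht x hxX, hlv, rfl, ?_⟩, hne⟩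
        intro hbot; exact hne (by rw [hbot, inf_bot_eq])
    obtain ⟨w, hw, hyw⟩ := (hXreg _ hmaxX).2.2.2 y (Set.mem_univ y) hy
    obtain ⟨s, hsN, hslvl, rfl, -⟩ := hw
    exact ⟨s, hsN, hslvl, hyw⟩
  -- nodes below δ compatible with b are predecessors of ts
  have hcomp_ts : ∀ s : T, lvl s < δ → b ⊓ f s ≠ ⊥ → s < ts := by
    intro s hslvl hbs
    have h1 : f s ⊓ f ts ≠ ⊥ := by
      intro h
      apply hbs
      have h2 : b ⊓ f s ≤ f s ⊓ f ts := le_inf inf_le_right (inf_le_left.trans hbt)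
      exact le_bot_iff.mp (h2.trans h.le)
    have h2 : s ≤ ts ∨ ts ≤ s := by
      by_contra hcon
      push_neg at hcon
      exact h1 (hincomp s ts hcon.1 hcon.2)
    rcases h2 with h | h
    · rcases lt_or_eq_of_le h with h' | h'
      · exact h'
      · exfalso; rw [h', hts_lvl] at hslvl; exact lt_irrefl _ hslvl
    · exfalso
      rcases lt_or_eq_of_le h with h' | h'
      · have := hmono ts s h'
        rw [hts_lvl] at this
        exact lt_irrefl _ (this.trans hslvl)
      · rw [← h', hts_lvl] at hslvl; exact lt_irrefl _ hslvl
  -- b decides the branch through N: the predecessor map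
  have hpredmap : ∀ t ∈ N, ∃ s ∈ N, lvl s = lvl t ∧ b ≤ f s := by
    intro t ht
    obtain ⟨s, hsN, hslvl, hbs⟩ := hWmax t ht b hb0
    refine ⟨s, hsN, hslvl, ?_⟩
    by_contra hnle
    have hb' : b ⊓ (f s)ᶜ ≠ ⊥ := hinf_ne _ _ hnle
    obtain ⟨t₁, ht₁lvl, ht₁⟩ := key1 (lvl t) (b ⊓ (f s)ᶜ) (hlvl t) hb'
    have hbt₁ : b ⊓ f t₁ ≠ ⊥ := by
      intro h
      exact ht₁ (le_bot_iff.mp ((inf_le_inf_right (f t₁) inf_le_left).trans h.le))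
    have hs_lt : s < ts := hcomp_ts s (by rw [hslvl]; exact hlvlN t ht) hbs
    have ht₁_lt : t₁ < ts := hcomp_ts t₁ (by rw [ht₁lvl]; exact hlvlN t ht) hbt₁
    have hst₁ : s = t₁ := by
      rcases hpred s t₁ ts hs_lt ht₁_lt with h | h
      · rcases lt_or_eq_of_le h with h' | h'
        · exact absurd (hmono _ _ h') (by rw [hslvl, ht₁lvl]; exact lt_irrefl _)
        · exact h'
      · rcases lt_or_eq_of_le h with h' | h'
        · exact absurd (hmono _ _ h') (by rw [hslvl, ht₁lvl]; exact lt_irrefl _)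
        · exact h'.symm
    apply ht₁
    rw [← hst₁]
    have : b ⊓ (f s)ᶜ ⊓ f s ≤ (f s)ᶜ ⊓ f s := inf_le_inf_right _ inf_le_right
    rw [compl_inf_eq_bot] at this
    exact le_bot_iff.mp this
  -- density of elements of X disjoint from b
  have hdense : ∀ x ∈ X, x ≠ ⊥ → ∃ y, (y ∈ X ∧ y ≠ ⊥ ∧ y ⊓ b = ⊥) ∧ y ≤ x := by
    intro x hxX hx0
    by_cases hxa : x ⊓ aᶜ = ⊥
    · have hxle : x ≤ a := hinf_bot x a hxa
      obtain ⟨hplvl, hpne, hp1, hp2⟩ := hg2 x hx0 hxle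
      obtain ⟨hN1, hN2⟩ := hg2N x hxX
      obtain ⟨s, hsN, hslvl, hbs⟩ := hpredmap (g2 x).1 hN1
      by_cases h1s : (g2 x).1 = s
      · refine ⟨x ⊓ f (g2 x).2, ⟨hXinf x hxX _ (hfX _ hN2), hp2, ?_⟩, inf_le_left⟩
        have hdisj : f (g2 x).2 ⊓ f s = ⊥ :=
          hsame _ _ (hplvl.symm.trans hslvl.symm) fun h => hpne (h1s.trans h.symm)
        have h3 : x ⊓ f (g2 x).2 ⊓ b ≤ f (g2 x).2 ⊓ f s :=
          le_inf (inf_le_left.trans inf_le_right) (inf_le_right.trans hbs)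
        exact le_bot_iff.mp (h3.trans hdisj.le)
      · refine ⟨x ⊓ f (g2 x).1, ⟨hXinf x hxX _ (hfX _ hN1), hp1, ?_⟩, inf_le_left⟩
        have hdisj : f (g2 x).1 ⊓ f s = ⊥ := hsame _ _ hslvl.symm h1s
        have h3 : x ⊓ f (g2 x).1 ⊓ b ≤ f (g2 x).1 ⊓ f s :=
          le_inf (inf_le_left.trans inf_le_right) (inf_le_right.trans hbs)
        exact le_bot_iff.mp (h3.trans hdisj.le)
    · refine ⟨x ⊓ aᶜ, ⟨hXinf x hxX aᶜ (hcompl a haX), hxa, ?_⟩, inf_le_left⟩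
      have h3 : x ⊓ aᶜ ⊓ b ≤ aᶜ ⊓ a :=
        le_inf (inf_le_left.trans inf_le_right) (inf_le_right.trans hba)
      rw [compl_inf_eq_bot] at h3
      exact le_bot_iff.mp h3
  -- a maximal antichain of X inside the dense set, by Zorn
  obtain ⟨W, hWmaxl⟩ := zorn_subset
      {A : Set B | A ⊆ {y : B | y ∈ X ∧ y ≠ ⊥ ∧ y ⊓ b = ⊥} ∧
        A.Pairwise fun x y => x ⊓ y = ⊥} (by
    intro c hc hchainc
    refine ⟨⋃₀ c, ⟨Set.sUnion_subset fun s hs => (hc hs).1, ?_⟩, fun s hs => Set.subset_sUnion_of_mem hs⟩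
    intro x hx y hy hne
    obtain ⟨s, hs, hxs⟩ := hx
    obtain ⟨s', hs', hys'⟩ := hy
    rcases hchainc.total hs hs' with h | h
    · exact (hc hs').2 (h hxs) hys' hne
    · exact (hc hs).2 hxs (h hys') hne)
  obtain ⟨⟨hWD, hWpw⟩, hWmx⟩ := hWmaxl
  have hmaxX : MaxACIn W X := by
    refine ⟨fun w hw => (hWD hw).1, fun hbot => (hWD hbot).2.1 rfl, hWpw, ?_⟩
    intro x hxX hx0
    obtain ⟨y, ⟨hyX, hy0, hyb⟩, hyx⟩ := hdense x hxX hx0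
    by_contra hcon
    push_neg at hcon
    have hyW : ∀ w ∈ W, y ⊓ w = ⊥ := fun w hw =>
      le_bot_iff.mp ((inf_le_inf_right w hyx).trans (hcon w hw).le)
    have hins : insert y W ∈ {A : Set B | A ⊆ {y : B | y ∈ X ∧ y ≠ ⊥ ∧ y ⊓ b = ⊥} ∧
        A.Pairwise fun x y => x ⊓ y = ⊥} := by
      refine ⟨Set.insert_subset ⟨hyX, hy0, hyb⟩ hWD, hWpw.insert fun w hw hne => ?_⟩
      exact ⟨hyW w hw, by rw [inf_comm]; exact hyW w hw⟩
    have hyW' : y ∈ W := hWmx hins (Set.subset_insert y W) (Set.mem_insert y W)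
    have : y ⊓ y = ⊥ := hyW y hyW'
    rw [inf_idem] at this
    exact hy0 this
  obtain ⟨w, hwW, hbw⟩ := (hXreg W hmaxX).2.2.2 b (Set.mem_univ b) hb0
  exact hbw (by rw [inf_comm]; exact (hWD hwW).2.2)
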